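/- arXiv:2503.21440 — 4 statements merged into one kernel-verified Lean document; each statement's English description precedes it below -/
import Mathlib

section
/- Let n ≥ 2 and define ρ(n,k) = 2^{2(n−k)} · ([n choose k]_2)^2 · (2^k)! · (2^n − 2^k)! / (2^n)!. Then ρ(n,2) = 2^{2n−3}/3 + 1/12 + 1/(2^{n+2} − 12). -/
/-- The Gaussian binomial coefficient `[n choose k]_2`. -/
def gb (n k : ℕ) : ℚ := ∏ i ∈ Finset.range k, (((2:ℚ)^n - 2^i) / ((2:ℚ)^k - 2^i))

/-- `ρ(n,k) = 2^{2(n−k)} · ([n choose k]_2)^2 · (2^k)! · (2^n − 2^k)! / (2^n)!`. -/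
def rho (n k : ℕ) : ℚ :=
  2^(2*(n-k)) * (gb n k)^2 * (2^k).factorial * (2^n - 2^k).factorial / (2^n).factorial

theorem stmt_4 (n : ℕ) (hn : 2 ≤ n) :
    rho n 2 = (2:ℚ)^(2*n-3)/3 + 1/12 + 1/((2:ℚ)^(n+2) - 12) := by
  obtain ⟨k, rfl⟩ : ∃ k, n = k + 2 := ⟨n - 2, (Nat.sub_add_cancel hn).symm⟩
  have h4 : (4:ℕ) ≤ 2^(k+2) := by
    calc (4:ℕ) = 2^2 := rfl
    _ ≤ 2^(k+2) := Nat.pow_le_pow_right (by norm_num) (by omega)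
  obtain ⟨m, hm⟩ : ∃ m, 2^(k+2) = m + 4 := ⟨2^(k+2) - 4, by omega⟩
  have hfac : (2^(k+2)).factorial
      = (m+4) * ((m+3) * ((m+2) * ((m+1) * m.factorial))) := by
    rw [hm]
    simp [Nat.factorial_succ]
  set y : ℚ := (2:ℚ)^k with hy
  have hy1 : (1:ℚ) ≤ y := one_le_pow₀ (by norm_num)
  have hx : ((2:ℚ))^(k+2) = 4 * y := by ring
  have hmQ : (m:ℚ) = 4 * y - 4 := by
    have : ((2^(k+2) : ℕ) : ℚ) = (m:ℚ) + 4 := by rw [hm]; push_cast; ring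
    push_cast at this
    linarith [this, hx]
  have hsub : (2^(k+2) - 2^2 : ℕ) = m := by omega
  have hgb : gb (k+2) 2 = ((4*y - 1)/3) * ((4*y - 2)/2) := by
    simp [gb, Finset.prod_range_succ, hx]
    ring
  have hfacne : ((m.factorial : ℚ)) ≠ 0 := by positivity
  have hexp : 2 * (k + 2) - 3 = 2*k + 1 := by omega
  have h1 : (4:ℚ)*y - 1 ≠ 0 := by nlinarith
  have h2 : (4:ℚ)*y - 2 ≠ 0 := by nlinarith
  have h3 : (4:ℚ)*y - 3 ≠ 0 := by nlinarith
  have h12 : (2:ℚ)^(k+2+2) - 12 = 16*y - 12 := by ring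
  have h12' : (16:ℚ)*y - 12 ≠ 0 := by nlinarith
  have hy0 : y ≠ 0 := by positivity
  rw [rho, hgb, hsub, hfac, hexp, h12]
  push_cast
  rw [hmQ]
  have h2k : (2:ℚ)^(2*k) = y^2 := by rw [hy, ← pow_mul, mul_comm k 2]
  have h2k1 : (2:ℚ)^(2*k+1) = 2 * y^2 := by rw [pow_succ, h2k]; ring
  rw [h2k, h2k1, show Nat.factorial 4 = 24 from rfl]
  clear_value y
  have hD : (4*y-4+4) * ((4*y-4+3) * ((4*y-4+2) * ((4*y-4+1) * (m.factorial:ℚ)))) ≠ 0 := by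
    have e1 : (4:ℚ)*y-4+4 = 4*y := by ring
    have e2 : (4:ℚ)*y-4+3 = 4*y-1 := by ring
    have e3 : (4:ℚ)*y-4+2 = 4*y-2 := by ring
    have e4 : (4:ℚ)*y-4+1 = 4*y-3 := by ring
    rw [e1, e2, e3, e4]
    have h0 : (4:ℚ)*y ≠ 0 := by positivity
    exact mul_ne_zero h0 (mul_ne_zero h1 (mul_ne_zero h2 (mul_ne_zero h3 hfacne)))
  rw [div_eq_iff hD]
  have h16 : y * 16 - 12 ≠ 0 := by contrapose! h12'; linarith
  field_simp
  ring
end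

section
/- With ρ(n,k) = 2^{2(n−k)} · ([n choose k]_2)^2 · (2^k)! · (2^n − 2^k)! / (2^n)!, the sum Σ_{k=4}^{n−1} ρ(n,k) tends to 0 as n → ∞. -/
open Finset

lemma prodQ_ge (k : ℕ) : (1:ℚ)/4 + (1/2)^(k+1) ≤ ∏ i ∈ range k, (1 - (1/2:ℚ)^(i+1)) := by
  induction k with
  | zero => norm_num
  | succ k ih =>
    rcases Nat.eq_zero_or_pos k with rfl | hk
    · norm_num
    rw [prod_range_succ]
    have hx : (0:ℚ) < (1/2:ℚ)^(k+1) := by positivity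
    have hx2 : ((1/2:ℚ))^(k+1) ≤ 1/4 := by
      calc ((1/2:ℚ))^(k+1) ≤ (1/2)^2 := by
            apply pow_le_pow_of_le_one (by norm_num) (by norm_num) (by omega)
        _ = 1/4 := by norm_num
    have h1 : (0:ℚ) < 1 - (1/2:ℚ)^(k+1) := by linarith
    calc (1:ℚ)/4 + (1/2)^(k+1+1)
        ≤ ((1:ℚ)/4 + (1/2)^(k+1)) * (1 - (1/2)^(k+1)) := by
          rw [show (1/2:ℚ)^(k+1+1) = (1/2)^(k+1) * (1/2) by ring]
          nlinarith [hx, hx2]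
      _ ≤ (∏ i ∈ range k, (1 - (1/2:ℚ)^(i+1))) * (1 - (1/2)^(k+1)) :=
          mul_le_mul_of_nonneg_right ih (le_of_lt h1)

lemma den_prod_ge (k : ℕ) : (2:ℚ)^(k*k)/4 ≤ ∏ i ∈ range k, ((2:ℚ)^k - 2^i) := by
  have hterm : ∀ i ∈ range k, ((2:ℚ)^k - 2^i) = 2^k * (1 - (1/2)^(k-i)) := by
    intro i hi
    rw [mem_range] at hi
    have h2 : ((2:ℚ))^k * (1/2)^(k-i) = 2^i := by
      rw [one_div, inv_pow, ← pow_sub₀ (2:ℚ) (by norm_num) (Nat.sub_le k i)]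
      congr 1; omega
    rw [mul_sub, mul_one, h2]
  rw [prod_congr rfl hterm, prod_mul_distrib, prod_const, card_range, ← pow_mul]
  have hrefl : ∏ i ∈ range k, (1 - (1/2:ℚ)^(k-i)) = ∏ i ∈ range k, (1 - (1/2:ℚ)^(i+1)) := by
    rw [← prod_range_reflect]
    apply prod_congr rfl
    intro i hi
    rw [mem_range] at hi
    congr 2
    omega
  rw [hrefl]
  have h1 : (1:ℚ)/4 ≤ ∏ i ∈ range k, (1 - (1/2:ℚ)^(i+1)) := by
    have := prodQ_ge k
    have : (0:ℚ) < (1/2:ℚ)^(k+1) := by positivity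
    linarith [prodQ_ge k]
  calc (2:ℚ)^(k*k)/4 = 2^(k*k) * (1/4) := by ring
    _ ≤ 2^(k*k) * ∏ i ∈ range k, (1 - (1/2:ℚ)^(i+1)) := by
        apply mul_le_mul_of_nonneg_left h1 (by positivity)

lemma gb_nonneg {n k : ℕ} (h : k ≤ n) : 0 ≤ gb n k := by
  apply prod_nonneg
  intro i hi
  rw [mem_range] at hi
  apply div_nonneg
  · have : (2:ℚ)^i ≤ 2^n := pow_le_pow_right₀ (by norm_num) (by omega)
    linarith
  · have : (2:ℚ)^i < 2^k := pow_lt_pow_right₀ (by norm_num) (by omega)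
    linarith

lemma gb_le {n k : ℕ} (h : k ≤ n) : gb n k ≤ 4 * 2^(k*(n-k)) := by
  have hden : (2:ℚ)^(k*k)/4 ≤ ∏ i ∈ range k, ((2:ℚ)^k - 2^i) := den_prod_ge k
  have hdenpos : (0:ℚ) < (2:ℚ)^(k*k)/4 := by positivity
  have hnum : ∏ i ∈ range k, ((2:ℚ)^n - 2^i) ≤ 2^(n*k) := by
    calc ∏ i ∈ range k, ((2:ℚ)^n - 2^i) ≤ ∏ i ∈ range k, (2:ℚ)^n := by
          apply prod_le_prod
          · intro i hi
            rw [mem_range] at hi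
            have : (2:ℚ)^i ≤ 2^n := pow_le_pow_right₀ (by norm_num) (by omega)
            linarith
          · intro i _
            have : (0:ℚ) < 2^i := by positivity
            linarith
      _ = 2^(n*k) := by rw [prod_const, card_range, ← pow_mul]
  have hnumnn : 0 ≤ ∏ i ∈ range k, ((2:ℚ)^n - 2^i) := by
    apply prod_nonneg
    intro i hi
    rw [mem_range] at hi
    have : (2:ℚ)^i ≤ 2^n := pow_le_pow_right₀ (by norm_num) (by omega)
    linarith
  have : gb n k = (∏ i ∈ range k, ((2:ℚ)^n - 2^i)) / ∏ i ∈ range k, ((2:ℚ)^k - 2^i) := by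
    rw [gb, prod_div_distrib]
  rw [this]
  calc (∏ i ∈ range k, ((2:ℚ)^n - 2^i)) / ∏ i ∈ range k, ((2:ℚ)^k - 2^i)
      ≤ 2^(n*k) / ((2:ℚ)^(k*k)/4) := div_le_div₀ (by positivity) hnum hdenpos hden
    _ = 4 * 2^(n*k) / 2^(k*k) := by ring
    _ = 4 * 2^(k*(n-k)) := by
        rw [show n*k = k*(n-k) + k*k by
          have : k*(n-k) + k*k = k*((n-k)+k) := by ring
          rw [this, Nat.sub_add_cancel h, Nat.mul_comm]]
        rw [pow_add]
        field_simp

lemma pow_mul_fact_le (N m : ℕ) (h : m ≤ N) :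
    N^m * m.factorial ≤ m^m * N.descFactorial m := by
  have hfact : m.factorial = ∏ i ∈ range m, (m - i) := by
    rw [← prod_range_add_one_eq_factorial, ← prod_range_reflect]
    apply prod_congr rfl
    intro i hi
    rw [mem_range] at hi
    omega
  have hterm : ∀ i ∈ range m, N * (m - i) ≤ m * (N - i) := by
    intro i hi
    rw [mem_range] at hi
    have h1 : i ≤ m := le_of_lt hi
    have h2 : i ≤ N := le_trans h1 h
    zify [h1, h2]
    nlinarith [h, h1]
  calc N^m * m.factorial = ∏ i ∈ range m, (N * (m - i)) := by
        rw [hfact, prod_mul_distrib, prod_const, card_range]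
    _ ≤ ∏ i ∈ range m, (m * (N - i)) := prod_le_prod' hterm
    _ = m^m * N.descFactorial m := by
        rw [Nat.descFactorial_eq_prod_range, prod_mul_distrib, prod_const, card_range]

lemma choose_ge {n k : ℕ} (h : k ≤ n) :
    2^((n-k)*2^k) ≤ (2^n).choose (2^k) := by
  have hm : (2:ℕ)^k ≤ 2^n := Nat.pow_le_pow_right (by norm_num) h
  have h1 := pow_mul_fact_le (2^n) (2^k) hm
  rw [Nat.descFactorial_eq_factorial_mul_choose] at h1
  have h2 : (2^n)^(2^k) ≤ (2^k)^(2^k) * (2^n).choose (2^k) := by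
    have hf : 0 < (2^k).factorial := Nat.factorial_pos _
    apply Nat.le_of_mul_le_mul_right _ hf
    calc (2^n)^(2^k) * (2^k).factorial
        ≤ (2^k)^(2^k) * ((2^k).factorial * (2^n).choose (2^k)) := h1
      _ = (2^k)^(2^k) * (2^n).choose (2^k) * (2^k).factorial := by ring
  rw [← Nat.pow_mul, ← Nat.pow_mul] at h2
  have h3 : 2^(k*2^k) * 2^((n-k)*2^k) = 2^(n*2^k) := by
    rw [← Nat.pow_add]
    congr 1
    have : k + (n - k) = n := Nat.add_sub_cancel' h
    calc k*2^k + (n-k)*2^k = (k + (n-k))*2^k := by ring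
      _ = n*2^k := by rw [this]
  have h4 : 2^(k*2^k) * 2^((n-k)*2^k) ≤ 2^(k*2^k) * (2^n).choose (2^k) := by
    rw [h3]; exact h2
  exact Nat.le_of_mul_le_mul_left h4 (by positivity)

lemma lin_le_pow {k : ℕ} (h : 4 ≤ k) : 3*k + 4 ≤ 2^k := by
  induction k with
  | zero => omega
  | succ k ih =>
    rcases Nat.lt_or_ge k 4 with hk | hk
    · interval_cases k <;> simp_all <;> omega
    · have := ih hk
      have h2 : (2:ℕ)^(k+1) = 2*2^k := by ring
      omega

lemma rho_le {n k : ℕ} (hk : 4 ≤ k) (hkn : k + 1 ≤ n) : rho n k ≤ 8 / 2^n := by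
  have hkn' : k ≤ n := by omega
  have hm : (2:ℕ)^k ≤ 2^n := Nat.pow_le_pow_right (by norm_num) hkn'
  set C : ℕ := (2^n).choose (2^k) with hC
  have hCpos : 0 < C := Nat.choose_pos hm
  have hfacts : (C : ℚ) * (2^k).factorial * (2^n - 2^k).factorial = (2^n).factorial := by
    have := Nat.choose_mul_factorial_mul_factorial hm
    exact_mod_cast congrArg (Nat.cast : ℕ → ℚ) this
  have hrho : rho n k = 2^(2*(n-k)) * (gb n k)^2 / C := by
    rw [rho]
    have hf1 : ((2^n).factorial : ℚ) ≠ 0 := by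
      exact_mod_cast Nat.factorial_ne_zero _
    have hC0 : (C:ℚ) ≠ 0 := by exact_mod_cast hCpos.ne'
    field_simp
    rw [← hfacts]
    ring
  rw [hrho]
  have hgb : gb n k ≤ 4 * 2^(k*(n-k)) := gb_le hkn'
  have hgbnn : 0 ≤ gb n k := gb_nonneg hkn'
  have hgb2 : (gb n k)^2 ≤ 16 * 2^(2*(k*(n-k))) := by
    have := mul_le_mul hgb hgb hgbnn (by positivity)
    calc (gb n k)^2 = gb n k * gb n k := sq (gb n k) ▸ by ring
      _ ≤ (4 * 2^(k*(n-k))) * (4 * 2^(k*(n-k))) := this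
      _ = 16 * 2^(2*(k*(n-k))) := by rw [two_mul, pow_add]; ring
  have hCge : (2:ℚ)^((n-k)*2^k) ≤ C := by exact_mod_cast choose_ge hkn'
  have hCq : (0:ℚ) < C := by exact_mod_cast hCpos
  have hA : 2^(2*(n-k)) * (gb n k)^2 ≤ 16 * 2^(2*(n-k) + 2*(k*(n-k))) := by
    rw [pow_add]
    calc (2:ℚ)^(2*(n-k)) * (gb n k)^2 ≤ 2^(2*(n-k)) * (16 * 2^(2*(k*(n-k)))) := by
          apply mul_le_mul_of_nonneg_left hgb2 (by positivity)
      _ = 16 * (2^(2*(n-k)) * 2^(2*(k*(n-k)))) := by ring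
  have key : 2*(n-k) + 2*(k*(n-k)) + (n+1) ≤ (n-k)*2^k := by
    have h2k := lin_le_pow hk
    have hd : 1 ≤ n - k := by omega
    have hnk : n - k + k = n := Nat.sub_add_cancel hkn'
    nlinarith [hd, h2k, hnk]
  calc 2^(2*(n-k)) * (gb n k)^2 / C ≤ 16 * 2^(2*(n-k) + 2*(k*(n-k))) / 2^((n-k)*2^k) := by
        apply div_le_div₀ (by positivity) hA (by positivity) hCge
    _ ≤ 8 / 2^n := by
        rw [div_le_div_iff₀ (by positivity) (by positivity)]
        calc 16 * (2:ℚ)^(2*(n-k) + 2*(k*(n-k))) * 2^n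
            = 8 * 2^(2*(n-k) + 2*(k*(n-k)) + (n+1)) := by
              rw [pow_add, pow_add]; ring
          _ ≤ 8 * 2^((n-k)*2^k) := by
              apply mul_le_mul_of_nonneg_left _ (by norm_num)
              exact pow_le_pow_right₀ (by norm_num) key

lemma rho_nonneg (n k : ℕ) : 0 ≤ rho n k := by
  rw [rho]
  positivity

lemma sq_le_pow {n : ℕ} (h : 4 ≤ n) : n^2 ≤ 2^n := by
  induction n with
  | zero => omega
  | succ n ih =>
    rcases Nat.lt_or_ge n 4 with hn | hn
    · have h3 : n = 3 := by omega
      subst h3; norm_num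
    · have := ih hn
      have h2 : (2:ℕ)^(n+1) = 2*2^n := by ring
      nlinarith

theorem stmt_7 :
    Filter.Tendsto (fun n : ℕ => ∑ k ∈ Finset.Icc 4 (n-1), rho n k)
      Filter.atTop (nhds 0) := by
  have hupper : Filter.Tendsto (fun n : ℕ => (8:ℚ)/n) Filter.atTop (nhds 0) :=
    Filter.Tendsto.div_atTop tendsto_const_nhds tendsto_natCast_atTop_atTop
  apply tendsto_of_tendsto_of_tendsto_of_le_of_le' tendsto_const_nhds hupper
  · filter_upwards with n
    exact Finset.sum_nonneg fun k _ => rho_nonneg n k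
  · filter_upwards [Filter.eventually_ge_atTop 4] with n hn
    have hsum : ∑ k ∈ Finset.Icc 4 (n-1), rho n k ≤ (n:ℚ) * (8/2^n) := by
      calc ∑ k ∈ Finset.Icc 4 (n-1), rho n k ≤ ∑ k ∈ Finset.Icc 4 (n-1), (8:ℚ)/2^n := by
            apply Finset.sum_le_sum
            intro k hkm
            rw [Finset.mem_Icc] at hkm
            exact rho_le hkm.1 (by omega)
        _ = (Finset.Icc 4 (n-1)).card * ((8:ℚ)/2^n) := by rw [Finset.sum_const, nsmul_eq_mul]
        _ ≤ (n:ℚ) * (8/2^n) := by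
            apply mul_le_mul_of_nonneg_right _ (by positivity)
            have : (Finset.Icc 4 (n-1)).card ≤ n := by
              rw [Nat.card_Icc]; omega
            exact_mod_cast this
    have hn2 : (n:ℚ) * (8/2^n) ≤ 8/n := by
      have hnpos : (0:ℚ) < n := by exact_mod_cast (by omega : 0 < n)
      rw [mul_div_assoc'] at *
      rw [div_le_div_iff₀ (by positivity) hnpos]
      have : (n:ℚ)^2 ≤ 2^n := by exact_mod_cast sq_le_pow hn
      nlinarith [this]
    linarith
end

section
/- For 0 ≤ k ≤ n, the sum over all permutations π of F_2^n of the number of k-dimensional affine subspaces L of F_2^n with π(L) also a k-dimensional affine subspace equals (2^n)! · ρ(n,k), where ρ(n,k) = 2^{2(n−k)} · ([n choose k]_2)^2 · (2^k)! · (2^n − 2^k)! / (2^n)!. -/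
open Finset Function Module

abbrev Bv (n : ℕ) := Fin n → ZMod 2

/-- `S` is a `k`-dimensional affine subspace of `F_2^n`. -/
def IsAffSub (n k : ℕ) (S : Set (Bv n)) : Prop :=
  ∃ (W : Submodule (ZMod 2) (Bv n)) (a : Bv n),
    Module.finrank (ZMod 2) W = k ∧ S = {x | x - a ∈ W}

section Fibers

lemma card_of_const_fibers {α β : Type*} [Finite α] [Finite β] (f : α → β) (c : ℕ)
    (hfib : ∀ b : β, Nat.card {a // f a = b} = c) :
    Nat.card α = Nat.card β * c := by
  classical
  cases nonempty_fintype α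
  cases nonempty_fintype β
  rw [Nat.card_congr (Equiv.sigmaFiberEquiv f).symm, Nat.card_eq_fintype_card,
    Fintype.card_sigma]
  have : ∀ b : β, Fintype.card {a // f a = b} = c := fun b => by
    rw [← Nat.card_eq_fintype_card]; exact hfib b
  simp [this, Finset.sum_const, Nat.card_eq_fintype_card, mul_comm]

end Fibers

section Glue

variable {α : Type*}

noncomputable def glue (L M : Set α) (e : L ≃ M) (f : (Lᶜ : Set α) ≃ (Mᶜ : Set α)) :
    Equiv.Perm α := by
  classical
  exact (Equiv.Set.sumCompl L).symm.trans ((e.sumCongr f).trans (Equiv.Set.sumCompl M))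

lemma glue_mem {L M : Set α} (e : L ≃ M) (f : (Lᶜ : Set α) ≃ (Mᶜ : Set α)) {x : α}
    (hx : x ∈ L) : glue L M e f x = (e ⟨x, hx⟩ : α) := by
  classical
  simp [glue, Equiv.Set.sumCompl_symm_apply_of_mem hx]

lemma glue_not_mem {L M : Set α} (e : L ≃ M) (f : (Lᶜ : Set α) ≃ (Mᶜ : Set α)) {x : α}
    (hx : x ∉ L) : glue L M e f x = (f ⟨x, hx⟩ : α) := by
  classical
  simp [glue, Equiv.Set.sumCompl_symm_apply_of_notMem hx]

lemma glue_image {L M : Set α} (e : L ≃ M) (f : (Lᶜ : Set α) ≃ (Mᶜ : Set α)) :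
    glue L M e f '' L = M := by
  ext y
  constructor
  · rintro ⟨x, hx, rfl⟩
    rw [glue_mem e f hx]
    exact (e ⟨x, hx⟩).2
  · intro hy
    refine ⟨e.symm ⟨y, hy⟩, (e.symm ⟨y, hy⟩).2, ?_⟩
    rw [glue_mem e f (e.symm ⟨y, hy⟩).2]
    simp

noncomputable def permFiberEquiv (L M : Set α) :
    {π : Equiv.Perm α // π '' L = M} ≃ (L ≃ M) × ((Lᶜ : Set α) ≃ (Mᶜ : Set α)) where
  toFun π :=
    ⟨(Equiv.Set.image π.1 L π.1.injective).trans (Equiv.setCongr π.2),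
     (Equiv.Set.image π.1 (Lᶜ) π.1.injective).trans (Equiv.setCongr (by
        rw [Set.image_compl_eq π.1.bijective, π.2]))⟩
  invFun ef := ⟨glue L M ef.1 ef.2, glue_image ef.1 ef.2⟩
  left_inv := by
    rintro ⟨π, hπ⟩
    ext x
    by_cases hx : x ∈ L
    · simp [glue_mem _ _ hx, Equiv.Set.image, Equiv.Set.imageOfInjOn]
    · simp [glue_not_mem _ _ hx, Equiv.Set.image, Equiv.Set.imageOfInjOn]
  right_inv := by
    rintro ⟨e, f⟩
    refine Prod.ext ?_ ?_
    · ext x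
      simp [Equiv.Set.image, Equiv.Set.imageOfInjOn, glue_mem e f x.2]
    · ext x
      simp [Equiv.Set.image, Equiv.Set.imageOfInjOn, glue_not_mem e f x.2]

lemma card_perm_fiber [Finite α] (L M : Set α) (hLM : Nat.card L = Nat.card M) :
    Nat.card {π : Equiv.Perm α // π '' L = M}
      = (Nat.card L).factorial * (Nat.card ↥(Lᶜ)).factorial := by
  classical
  haveI := Fintype.ofFinite α
  rw [Nat.card_congr (permFiberEquiv L M), Nat.card_prod]
  have h1 : Fintype.card L = Fintype.card M := by
    rw [← Nat.card_eq_fintype_card, ← Nat.card_eq_fintype_card]; exact hLM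
  have h2 : Fintype.card ↥(Lᶜ) = Fintype.card ↥(Mᶜ) := by
    rw [Fintype.card_compl_set, Fintype.card_compl_set, h1]
  rw [Nat.card_eq_fintype_card, Nat.card_eq_fintype_card,
    Fintype.card_equiv (Fintype.equivOfCardEq h1),
    Fintype.card_equiv (Fintype.equivOfCardEq h2), Nat.card_eq_fintype_card,
    Nat.card_eq_fintype_card]

end Glue

section Aff

lemma card_aff {n k : ℕ} {S : Set (Bv n)} (hS : IsAffSub n k S) : Nat.card S = 2 ^ k := by
  classical
  obtain ⟨W, a, hW, rfl⟩ := hS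
  have e : {x : Bv n | x - a ∈ W} ≃ W :=
    ⟨fun x => ⟨x.1 - a, x.2⟩, fun w => ⟨w.1 + a, by simp⟩,
     fun x => by ext1; simp, fun w => by ext1; simp⟩
  rw [Nat.card_congr e, Nat.card_eq_fintype_card, card_eq_pow_finrank (K := ZMod 2), ZMod.card, hW]

lemma dir_unique {n : ℕ} {W W' : Submodule (ZMod 2) (Bv n)} {a a' : Bv n}
    (h : {x : Bv n | x - a ∈ W} = {x : Bv n | x - a' ∈ W'}) : W = W' := by
  have hd : a - a' ∈ W' := by
    have : a ∈ {x : Bv n | x - a ∈ W} := by simp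
    rw [h] at this; exact this
  ext w
  constructor
  · intro hw
    have : w + a ∈ {x : Bv n | x - a ∈ W} := by simpa using hw
    rw [h] at this
    have h2 : w + a - a' ∈ W' := this
    have := W'.sub_mem h2 hd
    simpa using this
  · intro hw
    have h2 : w + a - a' ∈ W' := by
      have := W'.add_mem hw hd
      convert this using 1
      abel
    have : w + a ∈ {x : Bv n | x - a' ∈ W'} := h2
    rw [← h] at this
    simpa using this

lemma mem_of_aff {n : ℕ} {W : Submodule (ZMod 2) (Bv n)} {a b : Bv n}
    (hb : b ∈ {x : Bv n | x - a ∈ W}) : {x : Bv n | x - b ∈ W} = {x : Bv n | x - a ∈ W} := by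
  have hd : b - a ∈ W := hb
  ext x
  simp only [Set.mem_setOf_eq]
  constructor
  · intro hx
    have := W.add_mem hx hd
    convert this using 1; abel
  · intro hx
    have := W.sub_mem hx hd
    convert this using 1; abel

lemma card_subspace_fiber (n k : ℕ) (W : Submodule (ZMod 2) (Bv n)) (hW : finrank (ZMod 2) W = k) :
    Nat.card {s : Fin k → Bv n // LinearIndependent (ZMod 2) s ∧
        Submodule.span (ZMod 2) (Set.range s) = W}
      = ∏ i ∈ range k, (2 ^ k - 2 ^ i) := by
  classical
  have e : {s : Fin k → Bv n // LinearIndependent (ZMod 2) s ∧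
        Submodule.span (ZMod 2) (Set.range s) = W}
      ≃ {t : Fin k → W // LinearIndependent (ZMod 2) t} := by
    refine ⟨fun s => ⟨fun i => ⟨s.1 i, ?_⟩, ?_⟩, fun t => ⟨fun i => (t.1 i : Bv n), ?_, ?_⟩, ?_, ?_⟩
    · have := Submodule.subset_span (R := ZMod 2) (Set.mem_range_self (f := s.1) i)
      rwa [s.2.2] at this
    · apply LinearIndependent.of_comp W.subtype
      exact s.2.1
    · exact t.2.map' W.subtype W.ker_subtype
    · have hspan : Submodule.span (ZMod 2) (Set.range t.1) = ⊤ := by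
        apply Submodule.eq_top_of_finrank_eq
        rw [finrank_span_eq_card t.2, Fintype.card_fin, hW]
      have : Set.range (fun i => (t.1 i : Bv n)) = W.subtype '' Set.range t.1 := by
        rw [← Set.range_comp]; rfl
      rw [this, ← Submodule.map_span, hspan, Submodule.map_subtype_top]
    · intro s; rfl
    · intro t; rfl
  rw [Nat.card_congr e]
  have := card_linearIndependent (K := ZMod 2) (V := W) (k := k) (by rw [hW])
  rw [this]
  simp only [ZMod.card, hW]
  exact (Fin.prod_univ_eq_prod_range (fun i => (2 ^ k - 2 ^ i)) k)

lemma card_subspaces (n k : ℕ) (h : k ≤ n) :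
    Nat.card {W : Submodule (ZMod 2) (Bv n) // finrank (ZMod 2) W = k}
        * ∏ i ∈ range k, (2 ^ k - 2 ^ i)
      = ∏ i ∈ range k, (2 ^ n - 2 ^ i) := by
  classical
  have hf : ∀ (s : {s : Fin k → Bv n // LinearIndependent (ZMod 2) s}),
      finrank (ZMod 2) (Submodule.span (ZMod 2) (Set.range s.1)) = k := by
    intro s
    rw [finrank_span_eq_card s.2, Fintype.card_fin]
  have key := card_of_const_fibers
    (f := fun s : {s : Fin k → Bv n // LinearIndependent (ZMod 2) s} =>
      (⟨Submodule.span (ZMod 2) (Set.range s.1), hf s⟩ :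
        {W : Submodule (ZMod 2) (Bv n) // finrank (ZMod 2) W = k}))
    (c := ∏ i ∈ range k, (2 ^ k - 2 ^ i)) ?_
  · rw [← key]
    have hn : finrank (ZMod 2) (Bv n) = n := by
      simp [Module.finrank_fintype_fun_eq_card]
    have := card_linearIndependent (K := ZMod 2) (V := Bv n) (k := k) (by rw [hn]; exact h)
    rw [this]
    simp only [ZMod.card, hn]
    exact (Fin.prod_univ_eq_prod_range (fun i => (2 ^ n - 2 ^ i)) k)
  · rintro ⟨W, hW⟩
    rw [← card_subspace_fiber n k W hW]
    apply Nat.card_congr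
    refine ⟨fun s => ⟨s.1.1, s.1.2, by simpa [Subtype.ext_iff] using s.2⟩,
      fun s => ⟨⟨s.1, s.2.1⟩, by simp [Subtype.ext_iff, s.2.2]⟩, fun s => rfl, fun s => rfl⟩

lemma card_affine_mul (n k : ℕ) :
    Nat.card {W : Submodule (ZMod 2) (Bv n) // finrank (ZMod 2) W = k} * 2 ^ n
      = Nat.card {S : Set (Bv n) // IsAffSub n k S} * 2 ^ k := by
  classical
  have key := card_of_const_fibers
    (f := fun p : {W : Submodule (ZMod 2) (Bv n) // finrank (ZMod 2) W = k} × Bv n =>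
      (⟨{x : Bv n | x - p.2 ∈ p.1.1}, ⟨p.1.1, p.2, p.1.2, rfl⟩⟩ :
        {S : Set (Bv n) // IsAffSub n k S}))
    (c := 2 ^ k) ?_
  · rw [← key, Nat.card_prod, Nat.card_eq_fintype_card (α := Bv n)]
    congr 1
    simp [ZMod.card]
  · rintro ⟨S, hS⟩
    obtain ⟨W0, a0, hW0, rfl⟩ := hS
    rw [← card_aff ⟨W0, a0, hW0, rfl⟩]
    apply Nat.card_congr
    refine ⟨fun p => ⟨p.1.2, ?_⟩,
      fun b => ⟨(⟨W0, hW0⟩, b.1), Subtype.ext (mem_of_aff b.2)⟩, ?_, ?_⟩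
    · have h2 : {x : Bv n | x - p.1.2 ∈ p.1.1.1} = {x : Bv n | x - a0 ∈ W0} := by
        simpa [Subtype.ext_iff] using p.2
      have : p.1.2 ∈ {x : Bv n | x - p.1.2 ∈ p.1.1.1} := by simp
      rwa [h2] at this
    · rintro ⟨⟨⟨W, hW⟩, a⟩, hp⟩
      have h2 : {x : Bv n | x - a ∈ W} = {x : Bv n | x - a0 ∈ W0} := by
        simpa [Subtype.ext_iff] using hp
      have : W0 = W := dir_unique h2.symm
      subst this
      rfl
    · rintro ⟨b, hb⟩; rfl

end Aff

lemma nat_card_subtype {α : Type*} [Fintype α] (p : α → Prop) [DecidablePred p] :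
    Nat.card {x // p x} = ∑ x : α, if p x then 1 else 0 := by
  rw [Nat.card_eq_fintype_card, Fintype.card_subtype, Finset.card_filter]

lemma card_perm_aff {n k : ℕ} (L : Set (Bv n)) (hL : IsAffSub n k L) :
    Nat.card {π : Equiv.Perm (Bv n) // IsAffSub n k (π '' L)}
      = Nat.card {S : Set (Bv n) // IsAffSub n k S}
        * ((2^k).factorial * (2^n - 2^k).factorial) := by
  classical
  apply card_of_const_fibers
    (f := fun π : {π : Equiv.Perm (Bv n) // IsAffSub n k (π '' L)} =>
      (⟨π.1 '' L, π.2⟩ : {S : Set (Bv n) // IsAffSub n k S}))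
  rintro ⟨M, hM⟩
  have e : {π' : {π : Equiv.Perm (Bv n) // IsAffSub n k (π '' L)} //
      (⟨π'.1 '' L, π'.2⟩ : {S : Set (Bv n) // IsAffSub n k S}) = ⟨M, hM⟩}
      ≃ {π : Equiv.Perm (Bv n) // π '' L = M} := by
    refine ⟨fun π' => ⟨π'.1.1, by simpa [Subtype.ext_iff] using π'.2⟩,
      fun π => ⟨⟨π.1, by rw [π.2]; exact hM⟩, Subtype.ext π.2⟩, fun _ => rfl, fun _ => rfl⟩
  rw [Nat.card_congr e, card_perm_fiber L M (by rw [card_aff hL, card_aff hM]), card_aff hL]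
  congr 2
  haveI := Fintype.ofFinite ↥L
  haveI := Fintype.ofFinite ↥(Lᶜ : Set (Bv n))
  rw [Nat.card_eq_fintype_card, Fintype.card_compl_set]
  have h1 : Fintype.card ↥L = 2 ^ k := by rw [← Nat.card_eq_fintype_card, card_aff hL]
  have h2 : Fintype.card (Bv n) = 2 ^ n := by simp [ZMod.card]
  rw [h1, h2]

theorem stmt_9 (n k : ℕ) (h : k ≤ n) :
    (∑ π : Equiv.Perm (Bv n),
        (Nat.card {L : Set (Bv n) // IsAffSub n k L ∧ IsAffSub n k (π '' L)} : ℚ))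
      = (2^n).factorial * rho n k := by
  classical
  haveI : Fintype (Set (Bv n)) := Fintype.ofFinite _
  set A := Nat.card {S : Set (Bv n) // IsAffSub n k S} with hAdef
  set G := Nat.card {W : Submodule (ZMod 2) (Bv n) // finrank (ZMod 2) W = k} with hGdef
  set c := (2^k).factorial * (2^n - 2^k).factorial with hcdef
  -- the ℕ-valued total
  have hT : (∑ π : Equiv.Perm (Bv n),
      Nat.card {L : Set (Bv n) // IsAffSub n k L ∧ IsAffSub n k (π '' L)}) = A * (A * c) := by
    have hswap : (∑ π : Equiv.Perm (Bv n),
        Nat.card {L : Set (Bv n) // IsAffSub n k L ∧ IsAffSub n k (π '' L)})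
        = ∑ L : Set (Bv n), ∑ π : Equiv.Perm (Bv n),
            if IsAffSub n k L ∧ IsAffSub n k (π '' L) then 1 else 0 := by
      rw [Finset.sum_comm]
      exact Finset.sum_congr rfl fun π _ => nat_card_subtype _
    rw [hswap]
    have hL : ∀ L : Set (Bv n), (∑ π : Equiv.Perm (Bv n),
        if IsAffSub n k L ∧ IsAffSub n k (π '' L) then 1 else 0)
        = if IsAffSub n k L then A * c else 0 := by
      intro L
      by_cases hLaff : IsAffSub n k L
      · rw [if_pos hLaff, ← card_perm_aff L hLaff, nat_card_subtype]
        exact Finset.sum_congr rfl fun π _ => by simp [hLaff]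
      · rw [if_neg hLaff]
        exact Finset.sum_eq_zero fun π _ => by simp [hLaff]
    rw [Finset.sum_congr rfl fun L _ => hL L, ← Finset.sum_filter, Finset.sum_const,
      smul_eq_mul]
    congr 1
    rw [hAdef, Nat.card_eq_fintype_card, Fintype.card_subtype]
  -- cast the LHS
  have hcast : (∑ π : Equiv.Perm (Bv n),
      (Nat.card {L : Set (Bv n) // IsAffSub n k L ∧ IsAffSub n k (π '' L)} : ℚ))
      = ((A * (A * c) : ℕ) : ℚ) := by
    rw [← hT]
    push_cast
    rfl
  rw [hcast]
  -- arithmetic facts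
  have hA : A = 2 ^ (n - k) * G := by
    apply Nat.eq_of_mul_eq_mul_right (pow_pos (by norm_num : 0 < 2) k)
    rw [← card_affine_mul n k]
    have h2 : (2:ℕ) ^ n = 2 ^ (n - k) * 2 ^ k := by
      rw [← pow_add]
      congr 1
      omega
    rw [h2]
    ring
  have hGQ : (G : ℚ) = gb n k := by
    have hprod := card_subspaces n k h
    have hd : ∀ i ∈ range k, ((2:ℚ) ^ k - 2 ^ i) ≠ 0 := by
      intro i hi
      have : (2:ℚ) ^ i < 2 ^ k := by
        apply pow_lt_pow_right₀ (by norm_num) (Finset.mem_range.mp hi)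
      linarith
    have hcastk : ((∏ i ∈ range k, (2 ^ k - 2 ^ i) : ℕ) : ℚ)
        = ∏ i ∈ range k, ((2:ℚ) ^ k - 2 ^ i) := by
      rw [Nat.cast_prod]
      refine Finset.prod_congr rfl fun i hi => ?_
      have hle : (2:ℕ) ^ i ≤ 2 ^ k :=
        Nat.pow_le_pow_right (by norm_num) (Finset.mem_range.mp hi).le
      push_cast [Nat.cast_sub hle]
      ring
    have hcastn : ((∏ i ∈ range k, (2 ^ n - 2 ^ i) : ℕ) : ℚ)
        = ∏ i ∈ range k, ((2:ℚ) ^ n - 2 ^ i) := by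
      rw [Nat.cast_prod]
      refine Finset.prod_congr rfl fun i hi => ?_
      have hle : (2:ℕ) ^ i ≤ 2 ^ n :=
        Nat.pow_le_pow_right (by norm_num) ((Finset.mem_range.mp hi).le.trans h)
      push_cast [Nat.cast_sub hle]
      ring
    have hq : (G : ℚ) * ∏ i ∈ range k, ((2:ℚ) ^ k - 2 ^ i)
        = ∏ i ∈ range k, ((2:ℚ) ^ n - 2 ^ i) := by
      rw [← hcastk, ← hcastn, ← Nat.cast_mul, hprod]
    rw [gb, Finset.prod_div_distrib, eq_div_iff (Finset.prod_ne_zero_iff.mpr hd)]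
    exact hq
  -- unfold rho and finish
  have hfac : ((2^n).factorial : ℚ) ≠ 0 := Nat.cast_ne_zero.mpr (Nat.factorial_ne_zero _)
  rw [rho, mul_div_assoc', mul_div_cancel_left₀ _ hfac]
  rw [hA, hcdef]
  push_cast [hGQ]
  rw [two_mul, pow_add]
  ring
end

section
/- Let L be a k-dimensional affine subspace of F_2^n and π : L → F_2^k a bijection. For φ : F_2^n → F_2 define H_{π,φ} as the set of affine maps H : L → F_2^k such that the function x ↦ ⟨π(x), H(x)⟩ ⊕ φ(x) on L is affine (here ⟨·,·⟩ is the standard inner product on F_2^k). Then Σ_{φ : F_2^n → F_2} |H_{π,φ}| = 2^{2^n − 2^k + (k+1)^2}. -/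
/-- The standard inner product on `F_2^k`. -/
def ip (k : ℕ) (a b : Bv k) : ZMod 2 := ∑ i, a i * b i

/-- A map `H : L → F_2^k` is affine if it is the restriction of an affine map on `F_2^n`. -/
def IsAffMapOn (n k : ℕ) (L : Set (Bv n)) (H : L → Bv k) : Prop :=
  ∃ (A : Bv n →ₗ[ZMod 2] Bv k) (c : Bv k), ∀ x : L, H x = A x.val + c

/-- A Boolean function on `L` is affine if it is the restriction of `x ↦ ⟨a,x⟩ ⊕ c`. -/
def IsAffBoolOn (n : ℕ) (L : Set (Bv n)) (g : L → ZMod 2) : Prop :=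
  ∃ (a : Bv n) (c : ZMod 2), ∀ x : L, g x = ip n a x.val + c

noncomputable def ipL (m : ℕ) (a : Bv m) : Bv m →ₗ[ZMod 2] ZMod 2 where
  toFun := ip m a
  map_add' x y := by simp [ip, mul_add, Finset.sum_add_distrib]
  map_smul' c x := by simp [ip, Finset.mul_sum]; ring_nf; simp [mul_assoc, mul_left_comm]

lemma ip_single (m : ℕ) (b : Bv m) (i : Fin m) : ip m b (Pi.single i 1) = b i := by
  simp [ip, Pi.single_apply]

lemma exists_ip_rep (m : ℕ) (ℓ : Bv m →ₗ[ZMod 2] ZMod 2) : ∃ a : Bv m, ∀ y, ℓ y = ip m a y := by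
  refine ⟨fun i => ℓ (Pi.single i 1), fun y => ?_⟩
  have hy : y = ∑ i, y i • (Pi.single i 1 : Bv m) := by
    funext j; simp [Pi.single_apply, Finset.sum_apply]
  conv_lhs => rw [hy]
  rw [map_sum, ip]
  exact Finset.sum_congr rfl fun i _ => by simp [mul_comm]

lemma nat_card_sigma {ι : Type*} [Fintype ι] (α : ι → Type*) [∀ i, Finite (α i)] :
    Nat.card (Σ i, α i) = ∑ i, Nat.card (α i) := by
  letI : ∀ i, Fintype (α i) := fun i => Fintype.ofFinite _
  simp [Nat.card_eq_fintype_card, Fintype.card_sigma]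

section Setup

variable {n k : ℕ} {L : Set (Bv n)} (a : Bv n)
  (f : Bv k →ₗ[ZMod 2] Bv n) (g : Bv n →ₗ[ZMod 2] Bv k)

lemma bv_add_self {m : ℕ} (x : Bv m) : x + x = 0 :=
  funext fun i => CharTwo.add_self_eq_zero (x i)

lemma card_M (hgf : g.comp f = LinearMap.id)
    (e : Bv k ≃ L) (he : ∀ t, (e t : Bv n) = a + f t) :
    Nat.card {H : L → Bv k // IsAffMapOn n k L H} = 2 ^ (k * k + k) := by
  have hmem : ∀ (A : Bv k →ₗ[ZMod 2] Bv k) (c : Bv k),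
      IsAffMapOn n k L (fun x => A (e.symm x) + c) := by
    intro A c
    refine ⟨(A.comp g), c + A (g a), fun x => ?_⟩
    have hx : (x : Bv n) = a + f (e.symm x) := by rw [← he (e.symm x), e.apply_symm_apply]
    rw [hx]
    simp only [LinearMap.comp_apply, map_add]
    have hgfa : g (f (e.symm x)) = e.symm x := by
      have := congrArg (fun m => m (e.symm x)) hgf; simpa using this
    rw [hgfa]
    abel_nf
    simp [two_mul, two_nsmul, bv_add_self]
  have hbij : Function.Bijective
      (fun p : (Bv k →ₗ[ZMod 2] Bv k) × Bv k =>
        (⟨fun x => p.1 (e.symm x) + p.2, hmem p.1 p.2⟩ :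
          {H : L → Bv k // IsAffMapOn n k L H})) := by
    constructor
    · rintro ⟨A, c⟩ ⟨A', c'⟩ h
      have h' : ∀ t : Bv k, A t + c = A' t + c' := by
        intro t
        have := congrArg (fun H => H.val (e t)) h
        simpa using this
      have hc : c = c' := by have := h' 0; simpa using this
      subst hc
      have hA : A = A' := by
        ext t i
        have := congrArg (fun v => v i) (h' (Pi.single t 1))
        simpa using this
      simp [hA]
    · rintro ⟨H, A0, c0, hH⟩
      refine ⟨⟨A0.comp f, A0 a + c0⟩, ?_⟩
      apply Subtype.ext
      funext x
      have hx : (x : Bv n) = a + f (e.symm x) := by rw [← he (e.symm x), e.apply_symm_apply]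
      simp only [LinearMap.comp_apply]
      rw [hH x, hx, map_add]
      abel
  have := Nat.card_eq_of_bijective _ hbij
  rw [← this, Nat.card_prod]
  have h1 : Nat.card (Bv k →ₗ[ZMod 2] Bv k) = 2 ^ (k * k) := by
    rw [Nat.card_congr (LinearMap.toMatrix' : (Bv k →ₗ[ZMod 2] Bv k) ≃ₗ[ZMod 2] Matrix (Fin k) (Fin k) (ZMod 2)).toEquiv]
    rw [Nat.card_eq_fintype_card]
    simp [Matrix, pow_mul]
    convert (by simp : Fintype.card (Fin k → Fin k → ZMod 2) = (2 ^ k) ^ k)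
    exact Fintype.card_congr' rfl
  have h2 : Nat.card (Bv k) = 2 ^ k := by
    rw [Nat.card_eq_fintype_card]; simp
  rw [h1, h2, pow_add]

lemma ip_zero (m : ℕ) (v : Bv m) : ip m v 0 = 0 := by simp [ip]

lemma card_G (hgf : g.comp f = LinearMap.id)
    (e : Bv k ≃ L) (he : ∀ t, (e t : Bv n) = a + f t) :
    Nat.card {g' : L → ZMod 2 // IsAffBoolOn n L g'} = 2 ^ (k + 1) := by
  have hmem : ∀ (v : Bv k) (c : ZMod 2),
      IsAffBoolOn n L (fun x => ip k v (e.symm x) + c) := by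
    intro v c
    obtain ⟨a0, ha0⟩ := exists_ip_rep n ((ipL k v).comp g)
    refine ⟨a0, c + ((ipL k v).comp g) a, fun x => ?_⟩
    have hx : (x : Bv n) = a + f (e.symm x) := by rw [← he (e.symm x), e.apply_symm_apply]
    rw [← ha0 x.val, hx, map_add]
    have hgfa : g (f (e.symm x)) = e.symm x := by
      have := congrArg (fun m => m (e.symm x)) hgf; simpa using this
    simp only [LinearMap.comp_apply, hgfa]
    show ip k v (e.symm x) + c = ip k v (g a) + ip k v (e.symm x) + (c + ip k v (g a))
    generalize ip k v (e.symm x) = A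
    generalize ip k v (g a) = B
    revert A B c
    decide
  have hbij : Function.Bijective
      (fun p : Bv k × ZMod 2 =>
        (⟨fun x => ip k p.1 (e.symm x) + p.2, hmem p.1 p.2⟩ :
          {g' : L → ZMod 2 // IsAffBoolOn n L g'})) := by
    constructor
    · rintro ⟨v, c⟩ ⟨v', c'⟩ h
      have h' : ∀ t : Bv k, ip k v t + c = ip k v' t + c' := by
        intro t
        have := congrArg (fun G => G.val (e t)) h
        simpa using this
      have hc : c = c' := by
        have := h' 0; rwa [ip_zero, ip_zero, zero_add, zero_add] at this
      subst hc
      have hv : v = v' := by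
        funext i
        have := h' (Pi.single i 1)
        rwa [ip_single, ip_single, add_left_inj] at this
      simp [hv]
    · rintro ⟨g', a0, c0, hg'⟩
      obtain ⟨v, hv⟩ := exists_ip_rep k ((ipL n a0).comp f)
      refine ⟨⟨v, ip n a0 a + c0⟩, ?_⟩
      apply Subtype.ext
      funext x
      have hx : (x : Bv n) = a + f (e.symm x) := by rw [← he (e.symm x), e.apply_symm_apply]
      show ip k v (e.symm x) + (ip n a0 a + c0) = g' x
      have hadd : ip n a0 (a + f (e.symm x))
          = ip n a0 a + ip n a0 (f (e.symm x)) := map_add (ipL n a0) a (f (e.symm x))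
      have hv' : ip n a0 (f (e.symm x)) = ip k v (e.symm x) := hv (e.symm x)
      rw [hg' x, hx, hadd, hv']
      ring
  have := Nat.card_eq_of_bijective _ hbij
  rw [← this, Nat.card_prod]
  rw [Nat.card_eq_fintype_card, Nat.card_eq_fintype_card]
  simp [pow_succ]

end Setup

lemma exists_package (n k : ℕ) (W : Submodule (ZMod 2) (Bv n)) (a : Bv n)
    (hW : Module.finrank (ZMod 2) W = k) :
    ∃ (f : Bv k →ₗ[ZMod 2] Bv n) (g : Bv n →ₗ[ZMod 2] Bv k)
      (e : Bv k ≃ {x : Bv n | x - a ∈ W}),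
      g.comp f = LinearMap.id ∧ ∀ t, (e t : Bv n) = a + f t := by
  let b : Module.Basis (Fin k) (ZMod 2) W := Module.finBasisOfFinrankEq (ZMod 2) W hW
  let f : Bv k →ₗ[ZMod 2] Bv n := W.subtype.comp b.equivFun.symm.toLinearMap
  have hker : LinearMap.ker f = ⊥ :=
    LinearMap.ker_eq_bot.mpr ((Submodule.injective_subtype W).comp b.equivFun.symm.injective)
  obtain ⟨g, hgf⟩ := f.exists_leftInverse_of_injective hker
  have hfW : ∀ t, f t ∈ W := fun t => (b.equivFun.symm t).2
  have hmem : ∀ t, a + f t ∈ {x : Bv n | x - a ∈ W} := by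
    intro t
    show a + f t - a ∈ W
    rw [add_sub_cancel_left]
    exact hfW t
  refine ⟨f, g, ⟨fun t => ⟨a + f t, hmem t⟩,
    fun x => b.equivFun ⟨x.val - a, x.2⟩, ?_, ?_⟩, hgf, fun t => rfl⟩
  · intro t
    have h : (⟨a + f t - a, hmem t⟩ : W) = b.equivFun.symm t := by
      apply Subtype.ext
      show a + f t - a = (b.equivFun.symm t : Bv n)
      rw [add_sub_cancel_left]
      rfl
    show b.equivFun ⟨a + f t - a, hmem t⟩ = t
    rw [h, LinearEquiv.apply_symm_apply]
  · intro x
    apply Subtype.ext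
    show a + f (b.equivFun ⟨x.val - a, x.2⟩) = x.val
    have h2 : f (b.equivFun ⟨x.val - a, x.2⟩) = x.val - a := by
      show (W.subtype (b.equivFun.symm (b.equivFun ⟨x.val - a, x.2⟩))) = x.val - a
      rw [LinearEquiv.symm_apply_apply]
      rfl
    rw [h2]
    ring

lemma zmod2_cancel (a b : ZMod 2) : a + (a + b) = b := by revert a b; decide

theorem stmt_10 (n k : ℕ) (hk : k ≤ n) (L : Set (Bv n)) (hL : IsAffSub n k L)
    (π : Bv n → Bv k) (hπ : Set.BijOn π L Set.univ) :
    ∑ φ : Bv n → ZMod 2,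
        Nat.card {H : L → Bv k // IsAffMapOn n k L H ∧
          IsAffBoolOn n L (fun x => ip k (π x.val) (H x) + φ x.val)}
      = 2^(2^n - 2^k + (k+1)^2) := by
  classical
  obtain ⟨W, a, hW, hLW⟩ := hL
  subst hLW
  set L : Set (Bv n) := {x | x - a ∈ W} with hLdef
  obtain ⟨f, g, e, hgf, he⟩ := exists_package n k W a hW
  -- abbreviations
  set S : (Bv n → ZMod 2) → Type := fun φ =>
    {H : L → Bv k // IsAffMapOn n k L H ∧
      IsAffBoolOn n L (fun x => ip k (π x.val) (H x) + φ x.val)} with hS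
  have hsum : (∑ φ : Bv n → ZMod 2, Nat.card (S φ)) = Nat.card (Σ φ, S φ) :=
    (nat_card_sigma S).symm
  rw [hsum]
  -- the parameter space
  set T := ({H : L → Bv k // IsAffMapOn n k L H} ×
    {g' : L → ZMod 2 // IsAffBoolOn n L g'} × ({x : Bv n // x ∉ L} → ZMod 2)) with hT
  -- the bijection
  have hbij : ∃ F : T → (Σ φ, S φ), Function.Bijective F := by
    refine ⟨fun p => ⟨fun x => if hx : x ∈ L then
        ip k (π x) (p.1.1 ⟨x, hx⟩) + p.2.1.1 ⟨x, hx⟩ else p.2.2 ⟨x, hx⟩,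
      ⟨p.1.1, p.1.2, ?_⟩⟩, ?_, ?_⟩
    · -- membership: the boolean function equals p.2.1.1
      have hfun : (fun x : L => ip k (π x.val) (p.1.1 x) +
          (if hx : (x : Bv n) ∈ L then ip k (π x.val) (p.1.1 ⟨x, hx⟩) + p.2.1.1 ⟨x, hx⟩
           else p.2.2 ⟨x, hx⟩)) = p.2.1.1 := by
        funext x
        rw [dif_pos x.2]
        simp only [Subtype.coe_eta]
        exact zmod2_cancel _ _
      rw [hfun]
      exact p.2.1.2
    · -- injective
      intro p q h
      have hφ := congrArg Sigma.fst h
      have hH : p.1.1 = q.1.1 := congrArg (fun z : Σ φ, S φ => (z.2.val : L → Bv k)) h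
      have hg : p.2.1.1 = q.2.1.1 := by
        funext x
        have := congrArg (fun φ : Bv n → ZMod 2 => φ x.val) hφ
        simp only [dif_pos x.2, Subtype.coe_eta] at this
        rw [hH] at this
        exact add_left_cancel this
      have hψ : p.2.2 = q.2.2 := by
        funext x
        have := congrArg (fun φ : Bv n → ZMod 2 => φ x.val) hφ
        simp only [dif_neg x.2, Subtype.coe_eta] at this
        exact this
      exact Prod.ext (Subtype.ext hH) (Prod.ext (Subtype.ext hg) hψ)
    · -- surjective
      rintro ⟨φ, H, hH, hb⟩
      refine ⟨⟨⟨H, hH⟩, ⟨fun x => ip k (π x.val) (H x) + φ x.val, hb⟩, fun x => φ x.val⟩, ?_⟩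
      have hφ : (fun x => if hx : x ∈ L then
          ip k (π x) (H ⟨x, hx⟩) + (ip k (π x) (H ⟨x, hx⟩) + φ x) else φ x) = φ := by
        funext x
        by_cases hx : x ∈ L
        · rw [dif_pos hx]; exact zmod2_cancel _ _
        · rw [dif_neg hx]
      have key : ∀ (φ1 φ2 : Bv n → ZMod 2) (h : φ1 = φ2) (s1 : S φ1) (s2 : S φ2),
          s1.val = s2.val → (⟨φ1, s1⟩ : Σ φ, S φ) = ⟨φ2, s2⟩ := by
        rintro φ1 φ2 rfl s1 s2 hv
        exact congrArg _ (Subtype.ext hv)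
      exact key _ _ hφ _ _ rfl
  obtain ⟨F, hF⟩ := hbij
  rw [← Nat.card_eq_of_bijective F hF]
  rw [hT, Nat.card_prod, Nat.card_prod]
  rw [card_M a f g hgf e he, card_G a f g hgf e he]
  -- card of the outside functions
  have hcardL : Nat.card L = 2 ^ k := by
    rw [← Nat.card_congr e, Nat.card_eq_fintype_card]
    simp
  have hcardOut : Nat.card ({x : Bv n // x ∉ L} → ZMod 2) = 2 ^ (2 ^ n - 2 ^ k) := by
    rw [Nat.card_fun]
    have h1 : Nat.card {x : Bv n // x ∉ L} = 2 ^ n - 2 ^ k := by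
      rw [Nat.card_eq_fintype_card, Fintype.card_subtype_compl]
      have h2 : Fintype.card (Bv n) = 2 ^ n := by simp
      have h3 : Fintype.card {x : Bv n // x ∈ L} = 2 ^ k := by
        rw [← Nat.card_eq_fintype_card]
        exact hcardL
      rw [h2, h3]
    rw [h1, Nat.card_eq_fintype_card]
    simp
  rw [hcardOut]
  rw [← pow_add, ← pow_add]
  congr 1
  have h1 : (k + 1) ^ 2 = k * k + 2 * k + 1 := by ring
  rw [h1]
  generalize k * k = m
  generalize 2 ^ n - 2 ^ k = A
  omega
end
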